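/- Let (Ω, ℬ, μ) be a probability space. For each m ≥ 1, let 𝒯_m ⊂ (0,1) be a finite set of quantile levels with 𝒯_m ⊆ 𝒯_{m+1}, and suppose ∪_{m=1}^∞ 𝒯_m is dense in [0,1]. Let D be the space of distribution functions on [0,1] equipped with the Lévy metric, and let F^m : Ω → D be Borel measurable maps such that for every ω ∈ Ω, all m ≤ n, and every τ ∈ 𝒯_m there exists a point y (depending on ω, m, n, τ) with F^m(ω)(y) = F^n(ω)(y) = τ. Then the pushforward probability measures μ_m = (F^m)_*μ on D form a Cauchy sequence under the Prokhorov metric. -/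

import Mathlib

open MeasureTheory Filter Set

/-- A distribution function on `[0,1]`: nondecreasing, right-continuous, with values in `[0,1]`,
equal to `0` below `0` and equal to `1` from `1` on. -/
def IsDistFunOn01 (F : ℝ → ℝ) : Prop :=
  Monotone F ∧ (∀ y : ℝ, ContinuousWithinAt F (Set.Ici y) y) ∧
    (∀ y : ℝ, F y ∈ Set.Icc (0 : ℝ) 1) ∧ (∀ y : ℝ, y < 0 → F y = 0) ∧
    (∀ y : ℝ, 1 ≤ y → F y = 1)

/-- The Lévy distance between two (distribution) functions:
`d_L(F,G) = inf {ε > 0 : F(y − ε) − ε ≤ G(y) ≤ F(y + ε) + ε for all y}`. -/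
noncomputable def levyDist (F G : ℝ → ℝ) : ℝ :=
  sInf {ε : ℝ | 0 < ε ∧ ∀ y : ℝ, F (y - ε) - ε ≤ G y ∧ G y ≤ F (y + ε) + ε}

/-- The space `D` of all distribution functions on `[0,1]`. -/
def DistFun01 : Type := {F : ℝ → ℝ // IsDistFunOn01 F}

/-- One-sided pointwise bound from shared quantile points on a δ-net. -/
lemma one_sided_bound (F G : ℝ → ℝ) (hF : Monotone F) (hG : Monotone G)
    (hFr : ∀ y, F y ∈ Set.Icc (0 : ℝ) 1) (hGr : ∀ y, G y ∈ Set.Icc (0 : ℝ) 1)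
    (T : Finset ℝ) (δ : ℝ)
    (hnet : ∀ t ∈ Set.Icc (0 : ℝ) 1, ∃ τ ∈ T, |t - τ| < δ)
    (hsh : ∀ τ ∈ T, ∃ y, F y = τ ∧ G y = τ) (y : ℝ) :
    F y - G y ≤ 2 * δ := by
  by_contra h
  push_neg at h
  set t : ℝ := (F y + G y) / 2 with ht
  have hFy := hFr y
  have hGy := hGr y
  have htmem : t ∈ Set.Icc (0 : ℝ) 1 := by
    constructor
    · simp only [ht]; linarith [hFy.1, hGy.1]
    · simp only [ht]; linarith [hFy.2, hGy.2]
  obtain ⟨τ, hτT, hτ⟩ := hnet t htmem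
  rw [abs_lt] at hτ
  have h1 : G y < τ := by simp only [ht] at hτ ⊢; linarith [hτ.2]
  have h2 : τ < F y := by simp only [ht] at hτ ⊢; linarith [hτ.1]
  obtain ⟨y₀, hFy₀, hGy₀⟩ := hsh τ hτT
  rcases le_total y₀ y with hle | hle
  · have := hG hle
    rw [hGy₀] at this
    linarith
  · have := hF hle
    rw [hFy₀] at this
    linarith

/-- Uniform sup bound implies a Lévy-distance bound. -/
lemma levyDist_le_of_sup (F G : ℝ → ℝ) (hF : Monotone F) (c : ℝ) (hc : 0 ≤ c)
    (hsup : ∀ y, |F y - G y| ≤ c) : levyDist F G ≤ c := by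
  have hbdd : BddBelow {ε : ℝ | 0 < ε ∧ ∀ y : ℝ, F (y - ε) - ε ≤ G y ∧ G y ≤ F (y + ε) + ε} :=
    ⟨0, fun x hx => hx.1.le⟩
  refine le_of_forall_pos_le_add fun η hη => ?_
  refine csInf_le hbdd ⟨by linarith, fun y => ?_⟩
  have h1 : F (y - (c + η)) ≤ F y := hF (by linarith)
  have h2 : F y ≤ F (y + (c + η)) := hF (by linarith)
  have h3 := abs_le.mp (hsup y)
  exact ⟨by linarith [h3.2], by linarith [h3.1]⟩

/-- A uniform pointwise distance bound gives a Lévy–Prokhorov distance bound on pushforwards. -/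
lemma levyProkhorovDist_map_le {Ω : Type*} [MeasurableSpace Ω] (μ : Measure Ω)
    [IsProbabilityMeasure μ]
    [MetricSpace DistFun01] [MeasurableSpace DistFun01] [BorelSpace DistFun01]
    (X Y : Ω → DistFun01) (hX : Measurable X) (hY : Measurable Y) (c : ℝ) (hc : 0 ≤ c)
    (hd : ∀ ω, dist (X ω) (Y ω) ≤ c) :
    levyProkhorovDist (μ.map X) (μ.map Y) ≤ c := by
  have hE : levyProkhorovEDist (μ.map X) (μ.map Y) ≤ ENNReal.ofReal c := by
    apply levyProkhorovEDist_le_of_forall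
    intro ε B hε hεtop hB
    have hcε : c < ε.toReal := by
      have : (ENNReal.ofReal c).toReal < ε.toReal :=
        ENNReal.toReal_strict_mono hεtop.ne hε
      rwa [ENNReal.toReal_ofReal hc] at this
    have key : ∀ (U V : Ω → DistFun01), Measurable U → Measurable V →
        (∀ ω, dist (V ω) (U ω) ≤ c) →
        (μ.map U) B ≤ (μ.map V) (Metric.thickening ε.toReal B) + ε := by
      intro U V hU hV hdUV
      rw [Measure.map_apply hU hB,
        Measure.map_apply hV Metric.isOpen_thickening.measurableSet]
      refine le_trans (measure_mono fun ω hω => ?_) le_self_add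
      exact Metric.mem_thickening_iff.mpr ⟨U ω, hω, lt_of_le_of_lt (hdUV ω) hcε⟩
    exact ⟨key X Y hX hY (fun ω => (dist_comm (Y ω) (X ω)) ▸ hd ω),
      key Y X hY hX hd⟩
  have := ENNReal.toReal_mono ENNReal.ofReal_ne_top hE
  rwa [ENNReal.toReal_ofReal hc] at this

/-- Monotonicity of the nested family of quantile sets. -/
lemma T_mono (𝒯 : ℕ → Finset ℝ) (h𝒯sub : ∀ m, 1 ≤ m → 𝒯 m ⊆ 𝒯 (m + 1)) :
    ∀ m n, 1 ≤ m → m ≤ n → 𝒯 m ⊆ 𝒯 n := by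
  intro m n hm hmn
  induction n, hmn using Nat.le_induction with
  | base => exact fun x hx => hx
  | succ n hn ih => exact fun x hx => h𝒯sub n (le_trans hm hn) (ih hx)

/-- From density, extract a single finite quantile set forming a δ-net of `[0,1]`. -/
lemma exists_net (𝒯 : ℕ → Finset ℝ) (h𝒯sub : ∀ m, 1 ≤ m → 𝒯 m ⊆ 𝒯 (m + 1))
    (hdense : Set.Icc (0 : ℝ) 1 ⊆ closure (⋃ m ∈ Set.Ici 1, ((𝒯 m : Set ℝ)))) (δ : ℝ)
    (hδ : 0 < δ) :
    ∃ M : ℕ, 1 ≤ M ∧ ∀ t ∈ Set.Icc (0 : ℝ) 1, ∃ τ ∈ 𝒯 M, |t - τ| < δ := by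
  set U : Set ℝ := ⋃ m ∈ Set.Ici 1, ((𝒯 m : Set ℝ)) with hU
  have hcover : Set.Icc (0 : ℝ) 1 ⊆ ⋃ x ∈ U, Metric.ball x δ := by
    intro t ht
    obtain ⟨x, hxU, hxd⟩ := Metric.mem_closure_iff.mp (hdense ht) δ hδ
    exact Set.mem_biUnion hxU (Metric.mem_ball.mpr hxd)
  obtain ⟨b, hbU, hbfin, hbcov⟩ :=
    isCompact_Icc.elim_finite_subcover_image (fun x _ => Metric.isOpen_ball) hcover
  -- find M with b ⊆ 𝒯 M
  have key : ∀ (s : Set ℝ), s.Finite → s ⊆ U → ∃ M : ℕ, 1 ≤ M ∧ s ⊆ (𝒯 M : Set ℝ) := by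
    intro s hsfin
    refine Set.Finite.induction_on
      (motive := fun s _ => s ⊆ U → ∃ M : ℕ, 1 ≤ M ∧ s ⊆ (𝒯 M : Set ℝ)) s hsfin ?_ ?_
    · exact fun _ => ⟨1, le_refl 1, by simp⟩
    · intro x s hxs hsfin ih hins
      obtain ⟨M, hM1, hMs⟩ := ih (fun z hz => hins (Set.mem_insert_of_mem x hz))
      have hxU : x ∈ U := hins (Set.mem_insert x s)
      simp only [hU, Set.mem_iUnion] at hxU
      obtain ⟨m, hm1, hxm⟩ := hxU
      refine ⟨max M m, le_trans hM1 (le_max_left M m), ?_⟩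
      intro z hz
      rcases hz with rfl | hz
      · exact T_mono 𝒯 h𝒯sub m (max M m) hm1 (le_max_right M m) hxm
      · exact T_mono 𝒯 h𝒯sub M (max M m) hM1 (le_max_left M m) (hMs hz)
  obtain ⟨M, hM1, hMb⟩ := key b hbfin hbU
  refine ⟨M, hM1, fun t ht => ?_⟩
  obtain ⟨x, hxb, hxball⟩ := Set.mem_iUnion₂.mp (hbcov ht)
  exact ⟨x, hMb hxb, by simpa [Real.dist_eq] using Metric.mem_ball.mp hxball⟩

/-- Suppose `D`, the space of distribution functions on `[0,1]`, is equipped with the Lévy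
metric, and `F^m : Ω → D` are Borel measurable maps such that, for all `ω`, any `F^m(ω)` and
`F^n(ω)` with `1 ≤ m ≤ n` share a point realizing each quantile level `τ ∈ 𝒯_m`, where the
finite sets `𝒯_m ⊂ (0,1)` are nested with union dense in `[0,1]`.  Then the pushforward
probability measures `μ_m = (F^m)_*μ` form a Cauchy sequence in the Prokhorov metric. -/
theorem pushforward_cauchy_in_prokhorov
    {Ω : Type*} [MeasurableSpace Ω] (μ : Measure Ω) [IsProbabilityMeasure μ]
    [MetricSpace DistFun01] [MeasurableSpace DistFun01] [BorelSpace DistFun01]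
    (hdist : ∀ F G : DistFun01, dist F G = levyDist F.1 G.1)
    (𝒯 : ℕ → Finset ℝ)
    (h𝒯sub : ∀ m, 1 ≤ m → 𝒯 m ⊆ 𝒯 (m + 1))
    (h𝒯mem : ∀ m, 1 ≤ m → ∀ τ ∈ 𝒯 m, τ ∈ Set.Ioo (0 : ℝ) 1)
    (hdense : Set.Icc (0 : ℝ) 1 ⊆ closure (⋃ m ∈ Set.Ici 1, ((𝒯 m : Set ℝ))))
    (F : ℕ → Ω → DistFun01)
    (hFmeas : ∀ m, 1 ≤ m → Measurable (F m))
    (hshare : ∀ (ω : Ω) (m n : ℕ), 1 ≤ m → m ≤ n → ∀ τ ∈ 𝒯 m,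
      ∃ y : ℝ, (F m ω).1 y = τ ∧ (F n ω).1 y = τ) :
    ∀ ε : ℝ, 0 < ε → ∃ M : ℕ, 1 ≤ M ∧ ∀ m n : ℕ, M ≤ m → M ≤ n →
      levyProkhorovDist (μ.map (F m)) (μ.map (F n)) < ε := by
  intro ε hε
  have hδ : 0 < ε / 8 := by linarith
  obtain ⟨M, hM1, hnet⟩ := exists_net 𝒯 h𝒯sub hdense (ε / 8) hδ
  refine ⟨M, hM1, ?_⟩
  -- step 1: pointwise distance bound for M ≤ m ≤ n
  have hdistb : ∀ m n : ℕ, M ≤ m → m ≤ n → ∀ ω : Ω,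
      dist (F m ω) (F n ω) ≤ ε / 4 := by
    intro m n hMm hmn ω
    have hm1 : 1 ≤ m := le_trans hM1 hMm
    have hsh : ∀ τ ∈ 𝒯 M, ∃ y, (F m ω).1 y = τ ∧ (F n ω).1 y = τ := fun τ hτ =>
      hshare ω m n hm1 hmn τ (T_mono 𝒯 h𝒯sub M m hM1 hMm hτ)
    obtain ⟨hFmono, _, hFr, _, _⟩ := (F m ω).2
    obtain ⟨hGmono, _, hGr, _, _⟩ := (F n ω).2
    have hsup : ∀ y, |(F m ω).1 y - (F n ω).1 y| ≤ 2 * (ε / 8) := by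
      intro y
      rw [abs_le]
      constructor
      · have := one_sided_bound (F n ω).1 (F m ω).1 hGmono hFmono hGr hFr (𝒯 M) (ε / 8)
          hnet (fun τ hτ => (hsh τ hτ).imp fun y hy => ⟨hy.2, hy.1⟩) y
        linarith
      · exact one_sided_bound (F m ω).1 (F n ω).1 hFmono hGmono hFr hGr (𝒯 M) (ε / 8)
          hnet hsh y
    rw [hdist]
    calc levyDist (F m ω).1 (F n ω).1 ≤ 2 * (ε / 8) :=
          levyDist_le_of_sup _ _ hFmono _ (by linarith) hsup
      _ ≤ ε / 4 := by linarith
  -- step 2: Prokhorov bound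
  have hP : ∀ m n : ℕ, M ≤ m → m ≤ n →
      levyProkhorovDist (μ.map (F m)) (μ.map (F n)) ≤ ε / 4 := by
    intro m n hMm hmn
    exact levyProkhorovDist_map_le μ (F m) (F n) (hFmeas m (le_trans hM1 hMm))
      (hFmeas n (le_trans hM1 (le_trans hMm hmn))) (ε / 4) (by linarith) (hdistb m n hMm hmn)
  intro m n hMm hMn
  rcases le_total m n with hmn | hnm
  · exact lt_of_le_of_lt (hP m n hMm hmn) (by linarith)
  · rw [levyProkhorovDist_comm]
    exact lt_of_le_of_lt (hP n m hMn hnm) (by linarith)
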